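/- The only monic irreducible cubic polynomials with integer coefficients all of whose three roots are real and lie in the open interval (-2, 2) are X³ - X² - 2X + 1, X³ + X² - 2X - 1, X³ - 3X + 1, and X³ - 3X - 1. -/

import Mathlib

open Polynomial

set_option maxHeartbeats 1000000 in
private theorem cubics_check :
    ∀ b ∈ Finset.Icc (-5:ℤ) 5, ∀ c ∈ Finset.Icc (-11:ℤ) 11, ∀ d ∈ Finset.Icc (-7:ℤ) 7,
    1 ≤ 8 + 4*b + 2*c + d → 1 ≤ 8 - 4*b + 2*c - d →
    (8 + 4*b + 2*c + d) * (8 - 4*b + 2*c - d) ≤ 64 →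
    1 + b + c + d ≠ 0 → -1 + b - c + d ≠ 0 → d ≠ 0 →
    b*b - 2*c ≤ 11 →
    1 ≤ 18*b*c*d - 4*b^3*d + b^2*c^2 - 4*c^3 - 27*d^2 →
    (b = -1 ∧ c = -2 ∧ d = 1) ∨ (b = 1 ∧ c = -2 ∧ d = -1) ∨
    (b = 0 ∧ c = -3 ∧ d = 1) ∨ (b = 0 ∧ c = -3 ∧ d = -1) := by decide

private lemma cubic_rep (p : ℤ[X]) (hm : p.Monic) (h3 : p.natDegree = 3) :
    p = X^3 + C (p.coeff 2) * X^2 + C (p.coeff 1) * X + C (p.coeff 0) := by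
  have h := p.as_sum_range' 4 (by omega)
  have hc3 : p.coeff 3 = 1 := by
    have := hm.leadingCoeff
    rwa [leadingCoeff, h3] at this
  conv_lhs => rw [h]
  simp only [Finset.sum_range_succ, Finset.sum_range_zero, hc3,
    ← C_mul_X_pow_eq_monomial, map_one]
  ring

private lemma exists_root_Ioo (p : ℤ[X]) {a b : ℝ} (hab : a ≤ b)
    (ha : (Polynomial.aeval a p : ℝ) < 0) (hb : 0 < (Polynomial.aeval b p : ℝ)) :
    ∃ x ∈ Set.Ioo a b, (Polynomial.aeval x p : ℝ) = 0 := by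
  have hcont : ContinuousOn (fun x : ℝ => (Polynomial.aeval x p : ℝ)) (Set.Icc a b) :=
    (Polynomial.continuous_aeval p).continuousOn
  have h0 : (0:ℝ) ∈ Set.Ioo (Polynomial.aeval a p) (Polynomial.aeval b p) := ⟨ha, hb⟩
  obtain ⟨x, hx, hx0⟩ := intermediate_value_Ioo hab hcont h0
  exact ⟨x, hx, hx0⟩

private lemma exists_root_Ioo' (p : ℤ[X]) {a b : ℝ} (hab : a ≤ b)
    (ha : 0 < (Polynomial.aeval a p : ℝ)) (hb : (Polynomial.aeval b p : ℝ) < 0) :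
    ∃ x ∈ Set.Ioo a b, (Polynomial.aeval x p : ℝ) = 0 := by
  have hcont : ContinuousOn (fun x : ℝ => (Polynomial.aeval x p : ℝ)) (Set.Icc a b) :=
    (Polynomial.continuous_aeval p).continuousOn
  have h0 : (0:ℝ) ∈ Set.Ioo (Polynomial.aeval b p) (Polynomial.aeval a p) := ⟨hb, ha⟩
  obtain ⟨x, hx, hx0⟩ := intermediate_value_Ioo' hab hcont h0
  exact ⟨x, hx, hx0⟩

private lemma roots_real (p : ℤ[X]) (hm : p.Monic) (h3 : p.natDegree = 3)
    {x1 x2 x3 : ℝ} (h12 : x1 ≠ x2) (h13 : x1 ≠ x3) (h23 : x2 ≠ x3)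
    (r1 : (Polynomial.aeval x1 p : ℝ) = 0) (r2 : (Polynomial.aeval x2 p : ℝ) = 0)
    (r3 : (Polynomial.aeval x3 p : ℝ) = 0)
    {z : ℂ} (hz : Polynomial.aeval z p = 0) :
    z = (x1 : ℂ) ∨ z = (x2 : ℂ) ∨ z = (x3 : ℂ) := by
  set q : ℝ[X] := p.map (Int.castRingHom ℝ) with hqdef
  have hqm : q.Monic := hm.map _
  have hqd : q.natDegree = 3 := by
    rw [hqdef, hm.natDegree_map, h3]
  have hroot : ∀ x : ℝ, (Polynomial.aeval x p : ℝ) = 0 → IsRoot q x := by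
    intro x hx
    rw [IsRoot, hqdef, eval_map]
    rwa [aeval_def] at hx
  have hdvd : (X - C x1) * (X - C x2) * (X - C x3) ∣ q := by
    refine IsCoprime.mul_dvd ?_ ?_ (dvd_iff_isRoot.mpr (hroot x3 r3))
    · exact (IsCoprime.mul_left (isCoprime_X_sub_C_of_isUnit_sub (sub_ne_zero_of_ne h13).isUnit)
        (isCoprime_X_sub_C_of_isUnit_sub (sub_ne_zero_of_ne h23).isUnit))
    · exact IsCoprime.mul_dvd (isCoprime_X_sub_C_of_isUnit_sub (sub_ne_zero_of_ne h12).isUnit)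
        (dvd_iff_isRoot.mpr (hroot x1 r1)) (dvd_iff_isRoot.mpr (hroot x2 r2))
  have hprodm : ((X - C x1) * (X - C x2) * (X - C x3)).Monic :=
    ((monic_X_sub_C x1).mul (monic_X_sub_C x2)).mul (monic_X_sub_C x3)
  have hdeg : q.natDegree ≤ ((X - C x1) * (X - C x2) * (X - C x3)).natDegree := by
    rw [hqd, ((monic_X_sub_C x1).mul (monic_X_sub_C x2)).natDegree_mul (monic_X_sub_C x3),
      (monic_X_sub_C x1).natDegree_mul (monic_X_sub_C x2),
      natDegree_X_sub_C, natDegree_X_sub_C, natDegree_X_sub_C]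
  have hq : q = (X - C x1) * (X - C x2) * (X - C x3) :=
    eq_of_monic_of_dvd_of_natDegree_le hprodm hqm hdvd hdeg
  have hC : p.map (Int.castRingHom ℂ) = q.map (algebraMap ℝ ℂ) := by
    have he : (algebraMap ℝ ℂ).comp (Int.castRingHom ℝ) = Int.castRingHom ℂ :=
      RingHom.ext_int _ _
    rw [hqdef, map_map, he]
  have hzz : ((z - x1) * (z - x2) * (z - x3) : ℂ) = 0 := by
    have h0 : eval z (p.map (Int.castRingHom ℂ)) = 0 := by
      rw [eval_map, ← algebraMap_int_eq, ← aeval_def]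
      exact hz
    rw [hC, hq] at h0
    simpa using h0
  rcases mul_eq_zero.mp hzz with h | h
  · rcases mul_eq_zero.mp h with h' | h'
    · exact Or.inl (by linear_combination h')
    · exact Or.inr (Or.inl (by linear_combination h'))
  · exact Or.inr (Or.inr (by linear_combination h))

private lemma cubic_roots_in_Ioo (p : ℤ[X]) (hm : p.Monic) (h3 : p.natDegree = 3)
    {t0 t1 t2 t3 : ℝ} (hm2 : -2 ≤ t0) (h01 : t0 ≤ t1) (h12 : t1 ≤ t2) (h23 : t2 ≤ t3)
    (h2 : t3 ≤ 2)
    (s0 : (Polynomial.aeval t0 p : ℝ) < 0) (s1 : 0 < (Polynomial.aeval t1 p : ℝ))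
    (s2 : (Polynomial.aeval t2 p : ℝ) < 0) (s3 : 0 < (Polynomial.aeval t3 p : ℝ)) :
    ∀ z : ℂ, Polynomial.aeval z p = 0 → z.im = 0 ∧ -2 < z.re ∧ z.re < 2 := by
  obtain ⟨x1, hx1, e1⟩ := exists_root_Ioo p h01 s0 s1
  obtain ⟨x2, hx2, e2⟩ := exists_root_Ioo' p h12 s1 s2
  obtain ⟨x3, hx3, e3⟩ := exists_root_Ioo p h23 s2 s3
  intro z hz
  have hne12 : x1 ≠ x2 := ne_of_lt (lt_of_lt_of_le hx1.2 (le_of_lt hx2.1))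
  have hne13 : x1 ≠ x3 := ne_of_lt (lt_of_lt_of_le hx1.2 (h12.trans (le_of_lt hx3.1)))
  have hne23 : x2 ≠ x3 := ne_of_lt (lt_of_lt_of_le hx2.2 (le_of_lt hx3.1))
  have hb1 : -2 < x1 ∧ x1 < 2 :=
    ⟨lt_of_le_of_lt hm2 hx1.1, lt_of_lt_of_le hx1.2 (h12.trans (h23.trans h2))⟩
  have hb2 : -2 < x2 ∧ x2 < 2 :=
    ⟨lt_of_le_of_lt (hm2.trans h01) hx2.1, lt_of_lt_of_le hx2.2 (h23.trans h2)⟩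
  have hb3 : -2 < x3 ∧ x3 < 2 :=
    ⟨lt_of_le_of_lt (hm2.trans (h01.trans h12)) hx3.1, lt_of_lt_of_le hx3.2 h2⟩
  rcases roots_real p hm h3 hne12 hne13 hne23 e1 e2 e3 hz with h | h | h <;> subst h <;>
    simp [hb1, hb2, hb3]

private lemma eval_ne_zero (p : ℤ[X]) (hm : p.Monic) (h3 : p.natDegree = 3)
    (hirr : Irreducible (p.map (Int.castRingHom ℚ))) (a : ℤ) : p.eval a ≠ 0 := by
  intro h
  have hroot : IsRoot (p.map (Int.castRingHom ℚ)) (a : ℚ) := by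
    rw [IsRoot, eval_intCast_map, Int.cast_id, h, map_zero]
  have hdeg := degree_eq_one_of_irreducible_of_root hirr hroot
  have hnd : (p.map (Int.castRingHom ℚ)).natDegree = 3 := by rw [hm.natDegree_map, h3]
  have := natDegree_eq_of_degree_eq_some hdeg
  rw [hnd] at this
  exact absurd this (by norm_num)

private lemma irred_of (p : ℤ[X]) (hm : p.Monic) (h3 : p.natDegree = 3)
    (h0 : p.coeff 0 = 1 ∨ p.coeff 0 = -1)
    (he1 : p.eval 1 ≠ 0) (he2 : p.eval (-1) ≠ 0) :
    Irreducible (p.map (Int.castRingHom ℚ)) := by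
  have halg : Int.castRingHom ℚ = algebraMap ℤ ℚ := (algebraMap_int_eq ℚ).symm
  rw [halg]
  set q : ℚ[X] := p.map (algebraMap ℤ ℚ) with hq
  have hqm : q.Monic := hm.map _
  have hqd : q.natDegree = 3 := by rw [hq, hm.natDegree_map, h3]
  rw [hqm.irreducible_iff_roots_eq_zero_of_degree_le_three (by omega) (by omega)]
  rw [Multiset.eq_zero_iff_forall_notMem]
  intro r hr
  have hroot : Polynomial.aeval r p = 0 := by
    have := (mem_roots hqm.ne_zero).mp hr
    rw [IsRoot, hq, eval_map, ← aeval_def] at this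
    exact this
  obtain ⟨r', hr', hdvd⟩ := exists_integer_of_is_root_of_monic hm hroot
  have hu : IsUnit r' := by
    rcases h0 with h | h
    · rw [h] at hdvd; exact isUnit_of_dvd_one hdvd
    · rw [h] at hdvd; exact isUnit_of_dvd_unit hdvd (IsUnit.neg isUnit_one)
  have heval : Polynomial.eval r' p = 0 := by
    have : Polynomial.aeval ((algebraMap ℤ ℚ) r') p = 0 := hr' ▸ hroot
    rw [aeval_algebraMap_apply] at this
    have h2 : ((Polynomial.aeval r' p : ℤ) : ℚ) = 0 := this
    rw [Polynomial.coe_aeval_eq_eval] at h2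
    exact_mod_cast h2
  rcases Int.isUnit_iff.mp hu with h | h
  · exact he1 (h ▸ heval)
  · exact he2 (h ▸ heval)

private lemma aux_prod_le {x1 x2 x3 : ℝ} (h1l : -2 < x1) (h1u : x1 < 2)
    (h2l : -2 < x2) (h2u : x2 < 2) (h3l : -2 < x3) (h3u : x3 < 2) :
    (4 - x1^2) * ((4 - x2^2) * (4 - x3^2)) ≤ 64 := by
  have f1a : 0 < 4 - x1^2 := by nlinarith
  have f2a : 0 < 4 - x2^2 := by nlinarith
  have f3a : 0 < 4 - x3^2 := by nlinarith
  have f1b : 4 - x1^2 ≤ 4 := by nlinarith [sq_nonneg x1]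
  have f2b : 4 - x2^2 ≤ 4 := by nlinarith [sq_nonneg x2]
  have f3b : 4 - x3^2 ≤ 4 := by nlinarith [sq_nonneg x3]
  have h23 : (4 - x2^2) * (4 - x3^2) ≤ 16 := by nlinarith
  have h23p : 0 < (4 - x2^2) * (4 - x3^2) := mul_pos f2a f3a
  nlinarith

private lemma aux_mul_bound {u v : ℝ} (a1 : -2 < u) (a2 : u < 2) (a3 : -2 < v) (a4 : v < 2) :
    -4 < u*v ∧ u*v < 4 := by
  constructor <;> nlinarith

private lemma aux_triple_bound {x1 x2 x3 : ℝ} (h1l : -2 < x1) (h1u : x1 < 2)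
    (h2l : -2 < x2) (h2u : x2 < 2) (h3l : -2 < x3) (h3u : x3 < 2) :
    -8 < x1*(x2*x3) ∧ x1*(x2*x3) < 8 := by
  obtain ⟨a1, a2⟩ := aux_mul_bound h2l h2u h3l h3u
  constructor <;> nlinarith

private lemma aux_sq_sum {x1 x2 x3 : ℝ} (h1l : -2 < x1) (h1u : x1 < 2)
    (h2l : -2 < x2) (h2u : x2 < 2) (h3l : -2 < x3) (h3u : x3 < 2) :
    x1^2 + x2^2 + x3^2 < 12 := by
  nlinarith

set_option maxHeartbeats 1000000 in
open Polynomial in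
theorem cubics_with_all_roots_in_Ioo (p : ℤ[X]) :
    (p.Monic ∧ p.natDegree = 3 ∧ Irreducible (p.map (Int.castRingHom ℚ)) ∧
      ∀ z : ℂ, Polynomial.aeval z p = 0 → z.im = 0 ∧ -2 < z.re ∧ z.re < 2) ↔
    (p = X ^ 3 - X ^ 2 - 2 * X + 1 ∨ p = X ^ 3 + X ^ 2 - 2 * X - 1 ∨
     p = X ^ 3 - 3 * X + 1 ∨ p = X ^ 3 - 3 * X - 1) := by
  constructor
  · rintro ⟨hm, h3, hirr, hroots⟩
    set b := p.coeff 2 with hbdef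
    set c := p.coeff 1 with hcdef
    set d := p.coeff 0 with hddef
    have hrep := cubic_rep p hm h3
    have hqm : (p.map (Int.castRingHom ℂ)).Monic := hm.map _
    have hqd : (p.map (Int.castRingHom ℂ)).natDegree = 3 := by rw [hm.natDegree_map, h3]
    have hsplit : Splits (p.map (Int.castRingHom ℂ)) :=
      IsAlgClosed.splits _
    have hcard : (p.map (Int.castRingHom ℂ)).roots.card = 3 := by
      rw [← hqd]; exact splits_iff_card_roots.mp hsplit
    obtain ⟨r1, r2, r3, hR⟩ := Multiset.card_eq_three.mp hcard
    have hfac : p.map (Int.castRingHom ℂ) = (X - C r1) * ((X - C r2) * (X - C r3)) := by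
      have h := hsplit.eq_prod_roots_of_monic hqm
      rw [hR] at h
      simpa [Multiset.map_cons, Multiset.prod_cons, Multiset.map_singleton,
        Multiset.prod_singleton] using h
    have hr : ∀ r ∈ ({r1, r2, r3} : Multiset ℂ), Polynomial.aeval r p = 0 := by
      intro r hrm
      have h1 : r ∈ (p.map (Int.castRingHom ℂ)).roots := hR ▸ hrm
      have h2 := (mem_roots hqm.ne_zero).mp h1
      rwa [IsRoot, eval_map, ← algebraMap_int_eq, ← aeval_def] at h2
    have h1 := hroots r1 (hr r1 (by simp))
    have h2 := hroots r2 (hr r2 (by simp))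
    have h3' := hroots r3 (hr r3 (by simp))
    have hsep : (p.map (Int.castRingHom ℚ)).Separable := hirr.separable
    have hnd : ({r1, r2, r3} : Multiset ℂ).Nodup := by
      rw [← hR]
      have hcomp : (algebraMap ℚ ℂ).comp (Int.castRingHom ℚ) = Int.castRingHom ℂ :=
        RingHom.ext_int _ _
      have hmapeq : p.map (Int.castRingHom ℂ)
          = (p.map (Int.castRingHom ℚ)).map (algebraMap ℚ ℂ) := by
        rw [map_map, hcomp]
      rw [hmapeq]
      exact Polynomial.nodup_roots hsep.map
    have hne : r1 ≠ r2 ∧ r1 ≠ r3 ∧ r2 ≠ r3 := by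
      simp only [Multiset.insert_eq_cons, Multiset.nodup_cons, Multiset.mem_cons,
        Multiset.mem_singleton, Multiset.nodup_singleton, not_or] at hnd
      exact ⟨hnd.1.1, hnd.1.2, hnd.2.1⟩
    set x1 := r1.re with hx1def
    set x2 := r2.re with hx2def
    set x3 := r3.re with hx3def
    have er1 : r1 = (x1 : ℂ) := Complex.ext (by simp [hx1def]) (by simp [h1.1])
    have er2 : r2 = (x2 : ℂ) := Complex.ext (by simp [hx2def]) (by simp [h2.1])
    have er3 : r3 = (x3 : ℂ) := Complex.ext (by simp [hx3def]) (by simp [h3'.1])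
    have hexp : p.map (Int.castRingHom ℂ) =
        X^3 - C (r1+r2+r3) * X^2 + C (r1*r2+r1*r3+r2*r3) * X - C (r1*r2*r3) := by
      rw [hfac]
      simp only [map_add, map_mul]
      ring
    have hbC : ((b : ℤ) : ℂ) = -(r1+r2+r3) := by
      have hco := congrArg (fun f => Polynomial.coeff f 2) hexp
      simp only [coeff_map, coeff_add, coeff_sub, coeff_C_mul, coeff_X_pow, coeff_X,
        coeff_C] at hco
      norm_num at hco
      linear_combination hco
    have hcC : ((c : ℤ) : ℂ) = r1*r2+r1*r3+r2*r3 := by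
      have hco := congrArg (fun f => Polynomial.coeff f 1) hexp
      simp only [coeff_map, coeff_add, coeff_sub, coeff_C_mul, coeff_X_pow, coeff_X,
        coeff_C] at hco
      norm_num at hco
      linear_combination hco
    have hdC : ((d : ℤ) : ℂ) = -(r1*r2*r3) := by
      have hco := congrArg (fun f => Polynomial.coeff f 0) hexp
      simp only [coeff_map, coeff_add, coeff_sub, coeff_C_mul, coeff_X_pow, coeff_X,
        coeff_C] at hco
      norm_num at hco
      linear_combination hco
    rw [er1, er2, er3] at hbC hcC hdC
    have hbR : (b:ℝ) = -(x1+x2+x3) := by exact_mod_cast hbC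
    have hcR : (c:ℝ) = x1*x2+x1*x3+x2*x3 := by exact_mod_cast hcC
    have hdR : (d:ℝ) = -(x1*x2*x3) := by exact_mod_cast hdC
    have hx12 : x1 ≠ x2 := fun h => hne.1 (by rw [er1, er2, h])
    have hx13 : x1 ≠ x3 := fun h => hne.2.1 (by rw [er1, er3, h])
    have hx23 : x2 ≠ x3 := fun h => hne.2.2 (by rw [er2, er3, h])
    obtain ⟨-, hx1l, hx1u⟩ := h1
    obtain ⟨-, hx2l, hx2u⟩ := h2
    obtain ⟨-, hx3l, hx3u⟩ := h3'
    have hP : 1 ≤ 8 + 4*b + 2*c + d := by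
      have hpos : (0:ℝ) < ((8 + 4*b + 2*c + d : ℤ) : ℝ) := by
        push_cast
        have heq : (8 + 4*(b:ℝ) + 2*c + d) = (2 - x1) * ((2 - x2) * (2 - x3)) := by
          rw [hbR, hcR, hdR]; ring
        rw [heq]
        exact mul_pos (by linarith) (mul_pos (by linarith) (by linarith))
      have h0 : (0:ℤ) < 8 + 4*b + 2*c + d := by exact_mod_cast hpos
      omega
    have hM : 1 ≤ 8 - 4*b + 2*c - d := by
      have hpos : (0:ℝ) < ((8 - 4*b + 2*c - d : ℤ) : ℝ) := by
        push_cast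
        have heq : (8 - 4*(b:ℝ) + 2*c - d) = (2 + x1) * ((2 + x2) * (2 + x3)) := by
          rw [hbR, hcR, hdR]; ring
        rw [heq]
        exact mul_pos (by linarith) (mul_pos (by linarith) (by linarith))
      have h0 : (0:ℤ) < 8 - 4*b + 2*c - d := by exact_mod_cast hpos
      omega
    have hPM : (8 + 4*b + 2*c + d) * (8 - 4*b + 2*c - d) ≤ 64 := by
      have hreal : (((8 + 4*b + 2*c + d) * (8 - 4*b + 2*c - d) : ℤ) : ℝ) ≤ 64 := by
        push_cast
        have heq : ((8 + 4*(b:ℝ) + 2*c + d) * (8 - 4*b + 2*c - d)) =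
            (4 - x1^2) * ((4 - x2^2) * (4 - x3^2)) := by rw [hbR, hcR, hdR]; ring
        rw [heq]
        exact aux_prod_le hx1l hx1u hx2l hx2u hx3l hx3u
      exact_mod_cast hreal
    have hE1 : p.eval 1 = 1 + b + c + d := by
      conv_lhs => rw [hrep]
      simp
      try ring
    have h1ne : 1 + b + c + d ≠ 0 := fun h => eval_ne_zero p hm h3 hirr 1 (by rw [hE1, h])
    have hE2 : p.eval (-1) = -1 + b - c + d := by
      conv_lhs => rw [hrep]
      simp
      try ring
    have h2ne : -1 + b - c + d ≠ 0 := fun h => eval_ne_zero p hm h3 hirr (-1) (by rw [hE2, h])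
    have hd0 : d ≠ 0 := by
      have h0 := eval_ne_zero p hm h3 hirr 0
      rwa [← coeff_zero_eq_eval_zero] at h0
    have hs2 : b*b - 2*c ≤ 11 := by
      have hreal : ((b*b - 2*c : ℤ):ℝ) < 12 := by
        push_cast
        have heq : ((b:ℝ)*b - 2*c) = x1^2 + x2^2 + x3^2 := by rw [hbR, hcR]; ring
        rw [heq]
        exact aux_sq_sum hx1l hx1u hx2l hx2u hx3l hx3u
      have h0 : (b*b - 2*c : ℤ) < 12 := by exact_mod_cast hreal
      omega
    have hD : 1 ≤ 18*b*c*d - 4*b^3*d + b^2*c^2 - 4*c^3 - 27*d^2 := by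
      have hreal : (0:ℝ) < ((18*b*c*d - 4*b^3*d + b^2*c^2 - 4*c^3 - 27*d^2 : ℤ):ℝ) := by
        push_cast
        have heq : (18*(b:ℝ)*c*d - 4*(b:ℝ)^3*d + (b:ℝ)^2*c^2 - 4*(c:ℝ)^3 - 27*(d:ℝ)^2) =
            ((x1-x2) * ((x1-x3) * (x2-x3)))^2 := by rw [hbR, hcR, hdR]; ring
        rw [heq]
        have hne0 : (x1-x2) * ((x1-x3) * (x2-x3)) ≠ 0 :=
          mul_ne_zero (sub_ne_zero_of_ne hx12)
            (mul_ne_zero (sub_ne_zero_of_ne hx13) (sub_ne_zero_of_ne hx23))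
        exact lt_of_le_of_ne (sq_nonneg _) (Ne.symm (pow_ne_zero 2 hne0))
      have h0 : (0:ℤ) < 18*b*c*d - 4*b^3*d + b^2*c^2 - 4*c^3 - 27*d^2 := by exact_mod_cast hreal
      omega
    have hbmem : b ∈ Finset.Icc (-5:ℤ) 5 := by
      have hl : (-6:ℝ) < (b:ℝ) := by rw [hbR]; linarith
      have hu : (b:ℝ) < 6 := by rw [hbR]; linarith
      have hl' : (-6:ℤ) < b := by exact_mod_cast hl
      have hu' : b < 6 := by exact_mod_cast hu
      exact Finset.mem_Icc.mpr ⟨by omega, by omega⟩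
    have hcmem : c ∈ Finset.Icc (-11:ℤ) 11 := by
      obtain ⟨a1, a2⟩ := aux_mul_bound hx1l hx1u hx2l hx2u
      obtain ⟨a3, a4⟩ := aux_mul_bound hx1l hx1u hx3l hx3u
      obtain ⟨a5, a6⟩ := aux_mul_bound hx2l hx2u hx3l hx3u
      have hl : (-12:ℝ) < (c:ℝ) := by rw [hcR]; linarith
      have hu : (c:ℝ) < 12 := by rw [hcR]; linarith
      have hl' : (-12:ℤ) < c := by exact_mod_cast hl
      have hu' : c < 12 := by exact_mod_cast hu
      exact Finset.mem_Icc.mpr ⟨by omega, by omega⟩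
    have hdmem : d ∈ Finset.Icc (-7:ℤ) 7 := by
      have hl : (-8:ℝ) < x1*(x2*x3) ∧ x1*(x2*x3) < 8 :=
        aux_triple_bound hx1l hx1u hx2l hx2u hx3l hx3u
      have hl2 : (-8:ℝ) < (d:ℝ) := by rw [hdR]; nlinarith [hl.1, hl.2]
      have hu2 : (d:ℝ) < 8 := by rw [hdR]; nlinarith [hl.1, hl.2]
      have hl' : (-8:ℤ) < d := by exact_mod_cast hl2
      have hu' : d < 8 := by exact_mod_cast hu2
      exact Finset.mem_Icc.mpr ⟨by omega, by omega⟩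
    rcases cubics_check b hbmem c hcmem d hdmem hP hM hPM h1ne h2ne hd0 hs2 hD with
      ⟨hb', hc', hd'⟩ | ⟨hb', hc', hd'⟩ | ⟨hb', hc', hd'⟩ | ⟨hb', hc', hd'⟩
    · left
      rw [hrep, ← hbdef, ← hcdef, ← hddef, hb', hc', hd']
      simp only [map_neg, map_one, map_ofNat]
      ring
    · right; left
      rw [hrep, ← hbdef, ← hcdef, ← hddef, hb', hc', hd']
      simp only [map_neg, map_one, map_ofNat]
      ring
    · right; right; left
      rw [hrep, ← hbdef, ← hcdef, ← hddef, hb', hc', hd']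
      simp only [map_neg, map_one, map_ofNat, map_zero]
      ring
    · right; right; right
      rw [hrep, ← hbdef, ← hcdef, ← hddef, hb', hc', hd']
      simp only [map_neg, map_one, map_ofNat, map_zero]
      ring

  · rintro (rfl | rfl | rfl | rfl)
    · have hm : (X ^ 3 - X ^ 2 - 2 * X + 1 : ℤ[X]).Monic := by monicity!
      have h3 : (X ^ 3 - X ^ 2 - 2 * X + 1 : ℤ[X]).natDegree = 3 := by compute_degree!
      refine ⟨hm, h3, irred_of _ hm h3 (by norm_num) (by norm_num) (by norm_num), ?_⟩
      refine cubic_roots_in_Ioo _ hm h3 (t0 := -2) (t1 := 0) (t2 := 1) (t3 := 2)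
        (by norm_num) (by norm_num) (by norm_num) (by norm_num) (by norm_num) ?_ ?_ ?_ ?_ <;>
      · simp only [map_add, map_sub, map_mul, map_pow, map_one, map_ofNat, aeval_X]
        norm_num
    · have hm : (X ^ 3 + X ^ 2 - 2 * X - 1 : ℤ[X]).Monic := by monicity!
      have h3 : (X ^ 3 + X ^ 2 - 2 * X - 1 : ℤ[X]).natDegree = 3 := by compute_degree!
      refine ⟨hm, h3, irred_of _ hm h3 (by norm_num) (by norm_num) (by norm_num), ?_⟩
      refine cubic_roots_in_Ioo _ hm h3 (t0 := -2) (t1 := -1) (t2 := 0) (t3 := 2)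
        (by norm_num) (by norm_num) (by norm_num) (by norm_num) (by norm_num) ?_ ?_ ?_ ?_ <;>
      · simp only [map_add, map_sub, map_mul, map_pow, map_one, map_ofNat, aeval_X]
        norm_num
    · have hm : (X ^ 3 - 3 * X + 1 : ℤ[X]).Monic := by monicity!
      have h3 : (X ^ 3 - 3 * X + 1 : ℤ[X]).natDegree = 3 := by compute_degree!
      refine ⟨hm, h3, irred_of _ hm h3 (by norm_num) (by norm_num) (by norm_num), ?_⟩
      refine cubic_roots_in_Ioo _ hm h3 (t0 := -2) (t1 := 0) (t2 := 1) (t3 := 2)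
        (by norm_num) (by norm_num) (by norm_num) (by norm_num) (by norm_num) ?_ ?_ ?_ ?_ <;>
      · simp only [map_add, map_sub, map_mul, map_pow, map_one, map_ofNat, aeval_X]
        norm_num
    · have hm : (X ^ 3 - 3 * X - 1 : ℤ[X]).Monic := by monicity!
      have h3 : (X ^ 3 - 3 * X - 1 : ℤ[X]).natDegree = 3 := by compute_degree!
      refine ⟨hm, h3, irred_of _ hm h3 (by norm_num) (by norm_num) (by norm_num), ?_⟩
      refine cubic_roots_in_Ioo _ hm h3 (t0 := -2) (t1 := -1) (t2 := 0) (t3 := 2)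
        (by norm_num) (by norm_num) (by norm_num) (by norm_num) (by norm_num) ?_ ?_ ?_ ?_ <;>
      · simp only [map_add, map_sub, map_mul, map_pow, map_one, map_ofNat, aeval_X]
        norm_num
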